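/- If a serial episode α of N nodes has f_mi minimal windows, then its (N−1)-node prefix subepisode α_p = α[1]→...→α[N−1] has at least f_mi minimal windows. Specifically, for each minimal window [n_s, n_e] of α, the window of the earliest occurrence of α_p starting at n_s is a minimal window of α_p, and distinct minimal windows of α give distinct minimal windows of α_p. -/

import Mathlib

variable {A : Type}

/-- An occurrence of the (N+1)-node serial episode `α` in the event sequence
`E` (of length `n`): a strictly increasing index map matching the event-types. -/
def IsOcc (E : ℕ → A) (n : ℕ) {N : ℕ} (α : Fin (N+1) → A) (h : Fin (N+1) → ℕ) : Prop :=
  StrictMono h ∧ (∀ i, h i < n) ∧ (∀ i, E (h i) = α i)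

/-- Earliest transiting occurrence: each `h i.succ` is the least index after
`h i.castSucc` carrying event-type `α i.succ`. -/
def IsET (E : ℕ → A) (n : ℕ) {N : ℕ} (α : Fin (N+1) → A) (h : Fin (N+1) → ℕ) : Prop :=
  IsOcc E n α h ∧ ∀ (i : Fin N) (j : ℕ), h i.castSucc < j → E j = α i.succ → h i.succ ≤ j

/-- Lexicographic order on occurrences. -/
def OccLex {N : ℕ} (h1 h2 : Fin (N+1) → ℕ) : Prop :=
  ∃ i, (∀ k < i, h1 k = h2 k) ∧ h1 i < h2 i

/-- The window `[a, b]` contains an occurrence of `α`. -/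
def WindowHasOcc (E : ℕ → A) (n : ℕ) {N : ℕ} (α : Fin (N+1) → A) (a b : ℕ) : Prop :=
  ∃ h, IsOcc E n α h ∧ a ≤ h 0 ∧ h (Fin.last N) ≤ b

/-- `[a, b]` is a minimal window of `α`: it contains an occurrence and no
proper subwindow contains one. -/
def IsMinWindow (E : ℕ → A) (n : ℕ) {N : ℕ} (α : Fin (N+1) → A) (a b : ℕ) : Prop :=
  WindowHasOcc E n α a b ∧
    ∀ c d, a ≤ c → d ≤ b → (a < c ∨ d < b) → ¬ WindowHasOcc E n α c d

/-- A minimal occurrence: its window is a minimal window. -/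
def IsMinOcc (E : ℕ → A) (n : ℕ) {N : ℕ} (α : Fin (N+1) → A) (h : Fin (N+1) → ℕ) : Prop :=
  IsOcc E n α h ∧ IsMinWindow E n α (h 0) (h (Fin.last N))

/-- `h'` is the earliest transiting occurrence immediately following `h`
in the lexicographic enumeration of earliest transiting occurrences. -/
def NextET (E : ℕ → A) (n : ℕ) {N : ℕ} (α : Fin (N+1) → A) (h h' : Fin (N+1) → ℕ) : Prop :=
  IsET E n α h ∧ IsET E n α h' ∧ OccLex h h' ∧
    ¬ ∃ g, IsET E n α g ∧ OccLex h g ∧ OccLex g h'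

/-- `h1 <⋆ h2` are non-interleaved: `h2 (v_j) ≥ h1 (v_{j+1})` for all `j < N`. -/
def NonInterleaved {N : ℕ} (h1 h2 : Fin (N+1) → ℕ) : Prop :=
  ∀ i : Fin N, h1 i.succ ≤ h2 i.castSucc

/-- Non-overlapped occurrences: one ends strictly before the other begins. -/
def NonOverlapped {N : ℕ} (h1 h2 : Fin (N+1) → ℕ) : Prop :=
  h1 (Fin.last N) < h2 0 ∨ h2 (Fin.last N) < h1 0

lemma et_dom (E : ℕ → A) (n : ℕ) {N : ℕ} (β : Fin (N+1) → A) (hp g : Fin (N+1) → ℕ)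
    (het : IsET E n β hp) (hocc : IsOcc E n β g) (h0 : hp 0 ≤ g 0) :
    ∀ i, hp i ≤ g i := by
  intro i
  induction i using Fin.induction with
  | zero => exact h0
  | succ i ih =>
    exact het.2 i (g i.succ) (lt_of_le_of_lt ih (hocc.1 ((Fin.castSucc_lt_succ (i := i)))))
      (hocc.2.2 i.succ)

lemma minw_endpoints (E : ℕ → A) (n : ℕ) {N : ℕ} (α : Fin (N+1) → A) (a b : ℕ)
    (hmw : IsMinWindow E n α a b) :
    ∃ h, IsOcc E n α h ∧ h 0 = a ∧ h (Fin.last N) = b := by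
  obtain ⟨h, hocc, ha, hb⟩ := hmw.1
  refine ⟨h, hocc, ?_, ?_⟩ <;> by_contra hne
  · exact hmw.2 (h 0) (h (Fin.last N)) ha hb (Or.inl (lt_of_le_of_ne ha (Ne.symm hne)))
      ⟨h, hocc, le_refl _, le_refl _⟩
  · exact hmw.2 (h 0) (h (Fin.last N)) ha hb (Or.inr (lt_of_le_of_ne hb hne))
      ⟨h, hocc, le_refl _, le_refl _⟩

lemma minw_unique_end (E : ℕ → A) (n : ℕ) {N : ℕ} (α : Fin (N+1) → A) (a b b' : ℕ)
    (h1 : IsMinWindow E n α a b) (h2 : IsMinWindow E n α a b') : b = b' := by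
  rcases lt_trichotomy b b' with h | h | h
  · exact absurd h1.1 (h2.2 a b (le_refl a) (le_of_lt h) (Or.inr h))
  · exact h
  · exact absurd h2.1 (h1.2 a b' (le_refl a) (le_of_lt h) (Or.inr h))

noncomputable def etAux (E : ℕ → A) {N : ℕ} (β : Fin (N+1) → A) (a : ℕ) : ℕ → ℕ
  | 0 => a
  | k+1 => sInf {j | etAux E β a k < j ∧ E j = β ⟨(k+1) % (N+1), Nat.mod_lt _ N.succ_pos⟩}

lemma etAux_zero (E : ℕ → A) {N : ℕ} (β : Fin (N+1) → A) (a : ℕ) :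
    etAux E β a 0 = a := rfl

lemma etAux_succ_le (E : ℕ → A) {N : ℕ} (β : Fin (N+1) → A) (a k j : ℕ)
    (h1 : etAux E β a k < j) (h2 : E j = β ⟨(k+1) % (N+1), Nat.mod_lt _ N.succ_pos⟩) :
    etAux E β a (k+1) ≤ j := by
  rw [etAux]
  exact Nat.sInf_le ⟨h1, h2⟩

lemma etAux_succ_mem (E : ℕ → A) {N : ℕ} (β : Fin (N+1) → A) (a k j : ℕ)
    (h1 : etAux E β a k < j) (h2 : E j = β ⟨(k+1) % (N+1), Nat.mod_lt _ N.succ_pos⟩) :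
    etAux E β a k < etAux E β a (k+1) ∧
      E (etAux E β a (k+1)) = β ⟨(k+1) % (N+1), Nat.mod_lt _ N.succ_pos⟩ := by
  have h := Nat.sInf_mem (⟨j, h1, h2⟩ :
    {j' | etAux E β a k < j' ∧ E j' = β ⟨(k+1) % (N+1), Nat.mod_lt _ N.succ_pos⟩}.Nonempty)
  rw [etAux]
  exact h

attribute [irreducible] etAux

lemma exists_et (E : ℕ → A) (n : ℕ) {N : ℕ} (β : Fin (N+1) → A) (g : Fin (N+1) → ℕ)
    (hg : IsOcc E n β g) : ∃ hp, IsET E n β hp ∧ hp 0 = g 0 := by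
  classical
  have key : ∀ k, (hk : k ≤ N) → etAux E β (g 0) k ≤ g ⟨k, by omega⟩ ∧
      E (etAux E β (g 0) k) = β ⟨k, by omega⟩ := by
    intro k
    induction k with
    | zero =>
      intro hk
      have h0 : (⟨0, by omega⟩ : Fin (N+1)) = 0 := by ext; simp
      rw [etAux_zero, h0]
      exact ⟨le_refl _, hg.2.2 0⟩
    | succ k ih =>
      intro hk
      obtain ⟨ihle, ihE⟩ := ih (by omega)
      have hmin : (⟨(k+1) % (N+1), Nat.mod_lt _ N.succ_pos⟩ : Fin (N+1)) = ⟨k+1, by omega⟩ := by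
        ext
        simp [Nat.mod_eq_of_lt (by omega : k + 1 < N + 1)]
      have hle : etAux E β (g 0) k < g ⟨k+1, by omega⟩ :=
        lt_of_le_of_lt ihle (hg.1 (by simp [Fin.mk_lt_mk]))
      have hE2 : E (g ⟨k+1, by omega⟩) = β ⟨(k+1) % (N+1), Nat.mod_lt _ N.succ_pos⟩ :=
        (hg.2.2 ⟨k+1, by omega⟩).trans (congrArg β hmin.symm)
      exact ⟨etAux_succ_le E β (g 0) k _ hle hE2,
        (etAux_succ_mem E β (g 0) k _ hle hE2).2.trans (congrArg β hmin)⟩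
  have step : ∀ k, k < N → etAux E β (g 0) k < etAux E β (g 0) (k+1) := by
    intro k hk
    have hmin : (⟨(k+1) % (N+1), Nat.mod_lt _ N.succ_pos⟩ : Fin (N+1)) = ⟨k+1, by omega⟩ := by
      ext
      simp [Nat.mod_eq_of_lt (by omega : k + 1 < N + 1)]
    have hle : etAux E β (g 0) k < g ⟨k+1, by omega⟩ :=
      lt_of_le_of_lt (key k (by omega)).1 (hg.1 (by simp [Fin.mk_lt_mk]))
    have hE2 : E (g ⟨k+1, by omega⟩) = β ⟨(k+1) % (N+1), Nat.mod_lt _ N.succ_pos⟩ :=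
      (hg.2.2 ⟨k+1, by omega⟩).trans (congrArg β hmin.symm)
    exact (etAux_succ_mem E β (g 0) k _ hle hE2).1
  refine ⟨fun i => etAux E β (g 0) i.val, ⟨⟨?_, ?_, ?_⟩, ?_⟩, etAux_zero E β (g 0)⟩
  · rw [Fin.strictMono_iff_lt_succ]
    intro i
    simpa using step i.val i.isLt
  · intro i
    exact lt_of_le_of_lt (key i.val (by omega)).1
      (by simpa using hg.2.1 ⟨i.val, by omega⟩)
  · intro i
    have := (key i.val (by omega)).2
    simpa using this
  · intro i j hij hEj
    have hmin : (⟨(i.val+1) % (N+1), Nat.mod_lt _ N.succ_pos⟩ : Fin (N+1)) = i.succ := by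
      ext
      simp [Nat.mod_eq_of_lt (by omega : i.val + 1 < N + 1)]
    have hE2 : E j = β ⟨(i.val+1) % (N+1), Nat.mod_lt _ N.succ_pos⟩ :=
      hEj.trans (congrArg β hmin.symm)
    have h2 : etAux E β (g 0) (i.val+1) ≤ j :=
      etAux_succ_le E β (g 0) i.val j (by simpa using hij) hE2
    simpa [Fin.val_succ] using h2

lemma part1 (E : ℕ → A) (n : ℕ) {N : ℕ} (α : Fin (N+2) → A) (a b : ℕ)
    (hmw : IsMinWindow E n α a b) (hp : Fin (N+1) → ℕ)
    (het : IsET E n (fun i : Fin (N+1) => α i.castSucc) hp) (hp0 : hp 0 = a) :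
    IsMinWindow E n (fun i : Fin (N+1) => α i.castSucc) a (hp (Fin.last N)) := by
  set β : Fin (N+1) → A := fun i => α i.castSucc with hβ
  obtain ⟨h, hocc, h0, hlast⟩ := minw_endpoints E n α a b hmw
  -- restriction of h is an occurrence of β
  have hrocc : IsOcc E n β (fun i : Fin (N+1) => h i.castSucc) :=
    ⟨hocc.1.comp (fun i j hij => Fin.castSucc_lt_castSucc_iff.mpr hij), fun i => hocc.2.1 _, fun i => hocc.2.2 _⟩
  have hdom : ∀ i, hp i ≤ h i.castSucc :=
    et_dom E n β hp _ het hrocc (by rw [hp0, ← h0]; simp)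
  have hlt : hp (Fin.last N) < b := by
    have h1 : hp (Fin.last N) ≤ h (Fin.last N).castSucc := hdom _
    have h2 : h (Fin.last N).castSucc < h (Fin.last (N+1)) := by
      apply hocc.1
      rw [Fin.lt_def]
      simp
    omega
  constructor
  · exact ⟨hp, het.1, le_of_eq hp0.symm, le_refl _⟩
  · rintro c d hac hdb hcd ⟨g, gocc, hcg, hgd⟩
    -- extend g with b to an occurrence of α
    have hgend : g (Fin.last N) < b := lt_of_le_of_lt (le_trans hgd hdb) hlt
    rcases eq_or_lt_of_le (le_trans hac hcg) with hga | hga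
    · -- g starts at a : ET domination gives contradiction
      have hd := et_dom E n β hp g het gocc (by omega)
      have : hp (Fin.last N) ≤ d := le_trans (hd _) hgd
      have hca : c = a := le_antisymm (by omega) hac
      rcases hcd with h1 | h1
      · omega
      · omega
    · -- g starts strictly after a : extend and contradict minimality of [a,b]
      set g' : Fin (N+2) → ℕ := fun j => if hj : j.val < N+1 then g ⟨j.val, hj⟩ else b
        with hg'
      have hg'cast : ∀ i : Fin (N+1), g' i.castSucc = g i := by
        intro i
        simp only [hg']
        rw [dif_pos (by simp; omega : (i.castSucc).val < N+1)]
        exact congrArg g (Fin.val_injective (by simp))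
      have hg'last : g' (Fin.last (N+1)) = b := by
        simp only [hg']
        rw [dif_neg (by simp)]
      have hg'mono : StrictMono g' := by
        intro j k hjk
        have hjk' : j.val < k.val := hjk
        simp only [hg']
        by_cases hj : j.val < N+1 <;> by_cases hk : k.val < N+1
        · rw [dif_pos hj, dif_pos hk]
          exact gocc.1 (show (⟨j.val, hj⟩ : Fin (N+1)) < ⟨k.val, hk⟩ from hjk')
        · rw [dif_pos hj, dif_neg hk]
          calc g ⟨j.val, hj⟩ ≤ g (Fin.last N) := gocc.1.monotone (by
                rw [Fin.le_def]; simp; omega)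
            _ < b := hgend
        · omega
        · omega
      have hg'occ : IsOcc E n α g' := by
        refine ⟨hg'mono, ?_, ?_⟩
        · intro j
          by_cases hj : j.val < N+1
          · simp only [hg']; rw [dif_pos hj]; exact gocc.2.1 _
          · simp only [hg']; rw [dif_neg hj]; rw [← hlast]; exact hocc.2.1 _
        · intro j
          by_cases hj : j.val < N+1
          · simp only [hg']
            rw [dif_pos hj]
            rw [gocc.2.2 ⟨j.val, hj⟩]
            show α (Fin.castSucc ⟨j.val, hj⟩) = α j
            exact congrArg α (Fin.val_injective (by simp))
          · simp only [hg']
            rw [dif_neg hj]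
            have hj' : j = Fin.last (N+1) := by ext; simp; omega
            rw [hj', ← hlast]
            exact hocc.2.2 _
      have hg'0 : g' 0 = g 0 := by
        have : (0 : Fin (N+2)) = (0 : Fin (N+1)).castSucc := by ext; simp
        rw [this, hg'cast]
      exact hmw.2 (g 0) b (le_of_lt hga) (le_refl b) (Or.inl hga)
        ⟨g', hg'occ, le_of_eq hg'0.symm, le_of_eq hg'last⟩

theorem stmt13 (E : ℕ → A) (n : ℕ) {N : ℕ} (α : Fin (N+2) → A) :
    (∀ a b, IsMinWindow E n α a b →
      ∀ hp : Fin (N+1) → ℕ,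
        IsET E n (fun i : Fin (N+1) => α i.castSucc) hp → hp 0 = a →
        IsMinWindow E n (fun i : Fin (N+1) => α i.castSucc) a (hp (Fin.last N))) ∧
    {p : ℕ × ℕ | IsMinWindow E n α p.1 p.2}.ncard ≤
      {p : ℕ × ℕ |
        IsMinWindow E n (fun i : Fin (N+1) => α i.castSucc) p.1 p.2}.ncard := by
  classical
  set β : Fin (N+1) → A := fun i => α i.castSucc with hβ
  refine ⟨fun a b hmw hp het hp0 => part1 E n α a b hmw hp het hp0, ?_⟩
  -- finiteness of the target set
  have hfin : {p : ℕ × ℕ | IsMinWindow E n β p.1 p.2}.Finite := by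
    apply Set.Finite.subset (Set.finite_Iio n |>.prod (Set.finite_Iio n))
    rintro ⟨a, b⟩ hab
    obtain ⟨h, hocc, h0, hlast⟩ := minw_endpoints E n β a b hab
    exact ⟨by simpa [← h0] using hocc.2.1 0, by simpa [← hlast] using hocc.2.1 _⟩
  refine Set.ncard_le_ncard_of_injOn
    (fun p => (p.1, sInf {d | IsMinWindow E n β p.1 d})) ?_ ?_ hfin
  · rintro ⟨a, b⟩ hab
    obtain ⟨h, hocc, h0, hlast⟩ := minw_endpoints E n α a b hab
    have hrocc : IsOcc E n β (fun i : Fin (N+1) => h i.castSucc) :=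
      ⟨hocc.1.comp (fun i j hij => Fin.castSucc_lt_castSucc_iff.mpr hij), fun i => hocc.2.1 _, fun i => hocc.2.2 _⟩
    obtain ⟨hp, het, hp0⟩ := exists_et E n β _ hrocc
    have hm : IsMinWindow E n β a (hp (Fin.last N)) :=
      part1 E n α a b hab hp het (by rw [hp0]; exact h0)
    have hne : {d | IsMinWindow E n β a d}.Nonempty := ⟨_, hm⟩
    exact Nat.sInf_mem hne
  · rintro ⟨a, b⟩ hab ⟨a', b'⟩ hab' heq
    simp only [Prod.mk.injEq] at heq
    obtain ⟨h1, -⟩ := heq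
    subst h1
    exact Prod.ext rfl (minw_unique_end E n α a b b' hab hab')
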